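/- arXiv:1901.08106 — 11 statements merged into one kernel-verified Lean document; each statement's English description precedes it below -/
import Mathlib

section
/- Let (W, μ) be a measure space with μ a probability measure, and let φ : W × W → ℝ be antisymmetric (φ(v,w) = −φ(w,v) for all v,w) and integrable with respect to the product measure μ ⊗ μ, with each section w ↦ φ(v,w) integrable. Define the divergence div φ : W → ℝ by div φ(v) = ∫ φ(v,w) dμ(w), and define ψ : W × W → ℝ by ψ(v,w) = φ(v,w) − (div φ(v) − div φ(w)). Then ψ is antisymmetric and div ψ(v) = ∫ ψ(v,w) dμ(w) = 0 for μ-almost every v; that is, φ decomposes as the sum of the 'transitive' part grad(div φ)(v,w) = div φ(v) − div φ(w) and the 'cyclic' part ψ with vanishing divergence. -/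
open MeasureTheory

/-- Hodge-type decomposition of a functional-form game: subtracting the gradient of the
divergence leaves an antisymmetric flow whose divergence vanishes almost everywhere. -/
theorem ffg_hodge_decomposition {W : Type*} [MeasurableSpace W] (μ : Measure W)
    [IsProbabilityMeasure μ] (φ : W → W → ℝ)
    (hanti : ∀ v w, φ v w = - φ w v)
    (hint : Integrable (fun x : W × W => φ x.1 x.2) (μ.prod μ))
    (hsec : ∀ v, Integrable (φ v) μ) :
    let d : W → ℝ := fun v => ∫ w, φ v w ∂μ
    let ψ : W → W → ℝ := fun v w => φ v w - (d v - d w)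
    (∀ v w, ψ v w = - ψ w v) ∧
    (∀ᵐ v ∂μ, ∫ w, ψ v w ∂μ = 0) ∧
    (∀ v w, φ v w = (d v - d w) + ψ v w) := by
  intro d ψ
  have hd_int : Integrable d μ := by
    simpa using hint.integral_prod_left
  have hd0 : ∫ v, d v ∂μ = 0 := by
    have hswap : ∫ v, ∫ w, φ v w ∂μ ∂μ = ∫ w, ∫ v, φ v w ∂μ ∂μ :=
      integral_integral_swap hint
    have hneg : ∫ w, ∫ v, φ v w ∂μ ∂μ = - ∫ w, ∫ v, φ w v ∂μ ∂μ := by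
      rw [← integral_neg]
      congr 1; ext w
      rw [← integral_neg]
      congr 1; ext v
      simpa using hanti v w
    have : ∫ v, d v ∂μ = - ∫ v, d v ∂μ := by
      simpa [d] using hswap.trans hneg
    linarith
  refine ⟨?_, ?_, ?_⟩
  · intro v w
    simp only [ψ]
    rw [hanti v w]; ring
  · refine Filter.Eventually.of_forall fun v => ?_
    have h1 : ∫ w, ψ v w ∂μ = (∫ w, φ v w ∂μ) - ∫ w, (d v - d w) ∂μ := by
      exact integral_sub (hsec v) ((integrable_const (d v)).sub hd_int)
    rw [h1, integral_sub (integrable_const (d v)) hd_int, integral_const, hd0]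
    simp [d]
  · intro v w; simp [ψ]
end

section
/- Let (W, μ) be a measure space with μ a probability measure, let f : W → ℝ be bounded and measurable, and let ψ : W × W → ℝ be antisymmetric (ψ(v,w) = −ψ(w,v)), integrable with respect to μ ⊗ μ, and satisfy ∫ ψ(v,w) dμ(w) = 0 for μ-almost every v. Then ∫∫ (f(v) − f(w)) · ψ(v,w) dμ(v) dμ(w) = 0; that is, every gradient flow grad(f)(v,w) = f(v) − f(w) is L²-orthogonal to every divergence-free flow. -/
open MeasureTheory

/-- Every gradient flow is L²-orthogonal to every divergence-free flow. -/
theorem grad_orthogonal_divergence_free {W : Type*} [MeasurableSpace W] (μ : Measure W)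
    [IsProbabilityMeasure μ] (f : W → ℝ) (C : ℝ) (hfb : ∀ x, |f x| ≤ C)
    (hfm : Measurable f)
    (ψ : W → W → ℝ) (hanti : ∀ v w, ψ v w = - ψ w v)
    (hint : Integrable (fun x : W × W => ψ x.1 x.2) (μ.prod μ))
    (hdiv : ∀ᵐ v ∂μ, ∫ w, ψ v w ∂μ = 0) :
    ∫ v, (∫ w, (f v - f w) * ψ v w ∂μ) ∂μ = 0 := by
  -- integrability of f x.1 * ψ and f x.2 * ψ on the product
  have h1 : Integrable (fun x : W × W => f x.1 * ψ x.1 x.2) (μ.prod μ) :=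
    hint.bdd_mul ((hfm.comp measurable_fst).aestronglyMeasurable)
      (Filter.Eventually.of_forall fun x => by simpa using hfb x.1)
  have h2 : Integrable (fun x : W × W => f x.2 * ψ x.1 x.2) (μ.prod μ) :=
    hint.bdd_mul ((hfm.comp measurable_snd).aestronglyMeasurable)
      (Filter.Eventually.of_forall fun x => by simpa using hfb x.2)
  -- rewrite the inner integral a.e.
  have hsec := hint.prod_right_ae
  have hsec2 := h2.prod_right_ae
  have key : ∀ᵐ v ∂μ, (∫ w, (f v - f w) * ψ v w ∂μ)
      = - ∫ w, f w * ψ v w ∂μ := by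
    filter_upwards [hsec, hsec2, hdiv] with v hv hv2 hd
    have : (fun w => (f v - f w) * ψ v w)
        = fun w => f v * ψ v w - f w * ψ v w := by
      funext w; ring
    rw [this, integral_sub (hv.const_mul (f v)) hv2, integral_const_mul, hd, mul_zero,
      zero_sub]
  rw [integral_congr_ae key, integral_neg]
  -- now show ∫v ∫w f w * ψ v w = 0
  have e1 : ∫ v, (∫ w, f w * ψ v w ∂μ) ∂μ
      = ∫ x : W × W, f x.2 * ψ x.1 x.2 ∂(μ.prod μ) := (integral_integral h2)
  have e2 : ∫ x : W × W, f x.2 * ψ x.1 x.2 ∂(μ.prod μ)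
      = ∫ x : W × W, f x.1 * ψ x.2 x.1 ∂(μ.prod μ) := by
    rw [← integral_prod_swap]
    rfl
  have e3 : ∫ x : W × W, f x.1 * ψ x.2 x.1 ∂(μ.prod μ)
      = - ∫ x : W × W, f x.1 * ψ x.1 x.2 ∂(μ.prod μ) := by
    rw [← integral_neg]
    congr 1; funext x
    rw [hanti x.2 x.1]; ring
  have e4 : ∫ x : W × W, f x.1 * ψ x.1 x.2 ∂(μ.prod μ) = 0 := by
    have e4' : ∫ v, (∫ w, f v * ψ v w ∂μ) ∂μ
        = ∫ x : W × W, f x.1 * ψ x.1 x.2 ∂(μ.prod μ) := integral_integral h1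
    rw [← e4']
    have : ∀ᵐ v ∂μ, (∫ w, f v * ψ v w ∂μ) = 0 := by
      filter_upwards [hdiv] with v hd
      rw [integral_const_mul, hd, mul_zero]
    rw [integral_congr_ae this, integral_zero]
  rw [e1, e2, e3, e4, neg_zero, neg_zero]
end

section
/- For every real antisymmetric n × n matrix A (i.e. Aᵀ = −A) with n ≥ 1, there exists a probability vector p ∈ ℝⁿ (entries nonnegative, summing to 1) such that (pᵀA)_j ≥ 0 for every coordinate j. In other words, every symmetric zero-sum matrix game admits a Nash equilibrium strategy p with pᵀA ⪰ 0. -/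
open Matrix

/-- Every symmetric zero-sum matrix game (antisymmetric payoff matrix) admits a
Nash equilibrium strategy `p` with `pᵀA ⪰ 0`. -/
theorem antisymmetric_game_has_nash {n : ℕ} (hn : 1 ≤ n)
    (A : Matrix (Fin n) (Fin n) ℝ) (hA : Aᵀ = -A) :
    ∃ p : Fin n → ℝ, (∀ i, 0 ≤ p i) ∧ (∑ i, p i = 1) ∧
      ∀ j, 0 ≤ ∑ i, p i * A i j := by
  by_contra hcon
  push_neg at hcon
  -- the linear map p ↦ pᵀA
  set L : (Fin n → ℝ) →ₗ[ℝ] (Fin n → ℝ) := Matrix.vecMulLinear A with hL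
  have hLapp : ∀ p j, L p j = ∑ i, p i * A i j := by
    intro p j
    simp [hL, Matrix.vecMulLinear_apply, Matrix.vecMul, dotProduct]
  -- antisymmetry entrywise
  have hAanti : ∀ i j, A j i = -A i j := by
    intro i j
    have := congrFun (congrFun hA i) j
    simpa [Matrix.transpose_apply] using this
  -- the simplex
  set Δ : Set (Fin n → ℝ) := stdSimplex ℝ (Fin n) with hΔ
  -- the image set
  set K : Set (Fin n → ℝ) := L '' Δ with hK
  have hKconv : Convex ℝ K := (convex_stdSimplex ℝ (Fin n)).linear_image L
  have hKcomp : IsCompact K :=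
    (isCompact_stdSimplex ℝ (Fin n)).image L.continuous_of_finiteDimensional
  -- the nonnegative orthant
  set C : Set (Fin n → ℝ) := {x | ∀ i, 0 ≤ x i} with hC
  have hCconv : Convex ℝ C := by
    intro x hx y hy a b ha hb _
    intro i
    have := add_nonneg (mul_nonneg ha (hx i)) (mul_nonneg hb (hy i))
    simpa using this
  have hCclosed : IsClosed C := by
    have : C = Set.univ.pi fun _ : Fin n => Set.Ici (0 : ℝ) := by
      ext x
      simp only [Set.mem_univ_pi, Set.mem_Ici]
      exact Iff.rfl
    rw [this]
    exact isClosed_set_pi fun i _ => isClosed_Ici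
  have hdisj : Disjoint K C := by
    rw [Set.disjoint_left]
    rintro x ⟨p, hp, rfl⟩ hx
    obtain ⟨j, hj⟩ := hcon p hp.1 hp.2
    exact absurd (hx j) (by rw [hLapp]; exact not_le.mpr hj)
  obtain ⟨f, u, v, hfs, huv, hft⟩ :=
    geometric_hahn_banach_compact_closed hKconv hKcomp hCconv hCclosed hdisj
  -- v < 0 since 0 ∈ C
  have h0C : (0 : Fin n → ℝ) ∈ C := fun i => le_refl 0
  have hv0 : v < 0 := by have := hft 0 h0C; simpa using this
  -- the dual vector
  set y : Fin n → ℝ := fun j => f (Pi.single j 1) with hy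
  have hfeq : ∀ x : Fin n → ℝ, f x = ∑ j, x j * y j := by
    intro x
    have h1 := LinearMap.pi_apply_eq_sum_univ (f.toLinearMap) x
    simp only [ContinuousLinearMap.coe_coe, smul_eq_mul] at h1
    rw [h1]
    refine Finset.sum_congr rfl fun j _ => ?_
    have h2 : (fun k => if j = k then (1:ℝ) else 0) = Pi.single j 1 := by
      ext k; by_cases h : j = k <;> simp [Pi.single_apply, h, eq_comm]
    rw [h2]
  -- y is nonnegative
  have hynn : ∀ j, 0 ≤ y j := by
    intro j
    by_contra hneg
    push_neg at hneg
    set t : ℝ := (v - 1) / y j with ht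
    have htpos : 0 ≤ t := (div_pos_of_neg_of_neg (by linarith) hneg).le
    have hmem : (t • (Pi.single j 1 : Fin n → ℝ)) ∈ C := by
      intro i
      simp only [Pi.smul_apply, smul_eq_mul]
      exact mul_nonneg htpos (by by_cases h : j = i <;> simp [Pi.single_apply, h])
    have h5 := hft _ hmem
    rw [f.map_smul, smul_eq_mul] at h5
    have hty : t * y j = v - 1 := div_mul_cancel₀ _ (ne_of_lt hneg)
    rw [show f (Pi.single j 1) = y j from rfl] at h5
    linarith
  -- key strict inequality on the simplex
  have hkey : ∀ p ∈ Δ, ∑ j, (∑ i, p i * A i j) * y j < 0 := by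
    intro p hp
    have := hfs (L p) ⟨p, hp, rfl⟩
    have h2 : f (L p) < 0 := lt_trans this (lt_trans huv hv0)
    rw [hfeq] at h2
    have h3 : ∑ j, (∑ i, p i * A i j) * y j = ∑ j, L p j * y j :=
      Finset.sum_congr rfl fun j _ => by rw [hLapp]
    linarith
  -- y ≠ 0 : take any point of the simplex
  have hp0 : (Pi.single (⟨0, hn⟩ : Fin n) 1 : Fin n → ℝ) ∈ Δ := by
    constructor
    · intro i; by_cases h : (⟨0, hn⟩ : Fin n) = i <;> simp [Pi.single_apply, h]
    · simp
  have hyne : ∃ j, 0 < y j := by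
    by_contra hall
    push_neg at hall
    have hy0 : ∀ j, y j = 0 := fun j => le_antisymm (hall j) (hynn j)
    have := hkey _ hp0
    simp [hy0] at this
  obtain ⟨j0, hj0⟩ := hyne
  set s : ℝ := ∑ j, y j with hs
  have hspos : 0 < s :=
    Finset.sum_pos' (fun j _ => hynn j) ⟨j0, Finset.mem_univ _, hj0⟩
  set q : Fin n → ℝ := fun j => y j / s with hq
  have hqΔ : q ∈ Δ := by
    constructor
    · intro i; exact div_nonneg (hynn i) hspos.le
    · rw [← Finset.sum_div]; exact div_self hspos.ne'
  have hfinal := hkey q hqΔ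
  -- but the sum equals s * (qᵀ A q) = 0 by antisymmetry
  have hyq : ∀ j, y j = s * q j := by
    intro j; rw [hq]; field_simp
  have hquad : ∑ j, (∑ i, q i * A i j) * q j = 0 := by
    have h1 : ∑ j, (∑ i, q i * A i j) * q j = ∑ j, ∑ i, q i * A i j * q j := by
      refine Finset.sum_congr rfl fun j _ => ?_; rw [Finset.sum_mul]
    have h2 : ∑ j, ∑ i, q i * A i j * q j = ∑ i, ∑ j, q i * A i j * q j :=
      Finset.sum_comm
    have h3 : ∑ i, ∑ j, q i * A i j * q j = -∑ i, ∑ j, q j * A j i * q i := by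
      rw [← Finset.sum_neg_distrib]
      refine Finset.sum_congr rfl fun i _ => ?_
      rw [← Finset.sum_neg_distrib]
      refine Finset.sum_congr rfl fun j _ => ?_
      rw [hAanti i j]; ring
    have h4 : ∑ i, ∑ j, q j * A j i * q i = ∑ j, (∑ i, q i * A i j) * q j := by
      refine Finset.sum_congr rfl fun i _ => ?_
      rw [Finset.sum_mul]
    linarith
  have : ∑ j, (∑ i, q i * A i j) * y j = 0 := by
    calc ∑ j, (∑ i, q i * A i j) * y j
        = ∑ j, s * ((∑ i, q i * A i j) * q j) := by
          refine Finset.sum_congr rfl fun j _ => ?_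
          rw [hyq j]; ring
      _ = s * ∑ j, (∑ i, q i * A i j) * q j := by rw [Finset.mul_sum]
      _ = 0 := by rw [hquad, mul_zero]
  linarith
end

section
/- Let σ : ℝ → ℝ be a nondecreasing function, let f : Fin m → ℝ and g : Fin n → ℝ with m, n ≥ 1, and define the m × n matrix A by A_{ij} = σ(f(i) − g(j)). Let i* maximize f and j* maximize g. Then the pure strategy pair (e_{i*}, e_{j*}) is a saddle point of the zero-sum game on A: for all probability vectors p ∈ ℝᵐ and q ∈ ℝⁿ, pᵀ A e_{j*} ≤ e_{i*}ᵀ A e_{j*} ≤ e_{i*}ᵀ A q; consequently the value of the game equals σ(max_i f(i) − max_j g(j)), so the relative population performance compares the best agents in each population. -/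
/-- Proposition 4(ii): in a monotonic game the pure strategy pair of best agents is a
saddle point, and the value of the game is `σ(max f − max g)`. -/
theorem monotonic_game_value {m n : ℕ} (σ : ℝ → ℝ) (hσ : Monotone σ)
    (f : Fin m → ℝ) (g : Fin n → ℝ)
    (A : Matrix (Fin m) (Fin n) ℝ) (hA : ∀ i j, A i j = σ (f i - g j))
    (istar : Fin m) (histar : ∀ i, f i ≤ f istar)
    (jstar : Fin n) (hjstar : ∀ j, g j ≤ g jstar) :
    (∀ p : Fin m → ℝ, (∀ i, 0 ≤ p i) → (∑ i, p i = 1) →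
      ∑ i, p i * A i jstar ≤ A istar jstar) ∧
    (∀ q : Fin n → ℝ, (∀ j, 0 ≤ q j) → (∑ j, q j = 1) →
      A istar jstar ≤ ∑ j, A istar j * q j) ∧
    A istar jstar = σ (f istar - g jstar) := by
  refine ⟨?_, ?_, hA _ _⟩
  · intro p hp hps
    calc ∑ i, p i * A i jstar ≤ ∑ i, p i * A istar jstar := by
          apply Finset.sum_le_sum
          intro i _
          exact mul_le_mul_of_nonneg_left
            (by rw [hA, hA]; exact hσ (by linarith [histar i])) (hp i)
      _ = A istar jstar := by rw [← Finset.sum_mul, hps, one_mul]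
  · intro q hq hqs
    calc A istar jstar = ∑ j, A istar jstar * q j := by
          rw [← Finset.mul_sum, hqs, mul_one]
      _ ≤ ∑ j, A istar j * q j := by
          apply Finset.sum_le_sum
          intro j _
          exact mul_le_mul_of_nonneg_right
            (by rw [hA, hA]; exact hσ (by linarith [hjstar j])) (hq j)
end

section
/- Let A be a real m × k matrix and M a real n × m row-stochastic matrix (all entries nonnegative and each row sums to 1). Then the maximin value of the zero-sum game on M·A is at most the maximin value of the game on A: sup over probability vectors p ∈ ℝⁿ of (inf over probability vectors q ∈ ℝᵏ of pᵀ(MA)q) ≤ sup over probability vectors p' ∈ ℝᵐ of (inf over probability vectors q ∈ ℝᵏ of p'ᵀAq). In particular, if the convex hull of the rows of one population's evaluation payoffs is contained in that of another, the first population's relative performance against any third population is no larger. -/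
open Matrix

/-- Proposition 4(iii): if each row of one evaluation matrix is a convex combination of
rows of another (`M` row-stochastic), the maximin value of the game on `M·A` is at most
that of the game on `A`. -/
theorem maximin_mono_of_row_stochastic {m n k : ℕ}
    (hm : 0 < m) (hn : 0 < n) (hk : 0 < k)
    (A : Matrix (Fin m) (Fin k) ℝ) (M : Matrix (Fin n) (Fin m) ℝ)
    (hM0 : ∀ i j, 0 ≤ M i j) (hM1 : ∀ i, ∑ j, M i j = 1) :
    (⨆ p : {p : Fin n → ℝ // (∀ i, 0 ≤ p i) ∧ ∑ i, p i = 1},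
      ⨅ q : {q : Fin k → ℝ // (∀ j, 0 ≤ q j) ∧ ∑ j, q j = 1},
        ∑ i, ∑ j, p.1 i * (M * A) i j * q.1 j) ≤
    (⨆ p' : {p' : Fin m → ℝ // (∀ i, 0 ≤ p' i) ∧ ∑ i, p' i = 1},
      ⨅ q : {q : Fin k → ℝ // (∀ j, 0 ≤ q j) ∧ ∑ j, q j = 1},
        ∑ i, ∑ j, p'.1 i * A i j * q.1 j) := by
  haveI : NeZero m := ⟨hm.ne'⟩
  haveI : NeZero n := ⟨hn.ne'⟩
  haveI : NeZero k := ⟨hk.ne'⟩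
  have hPn : Nonempty {p : Fin n → ℝ // (∀ i, 0 ≤ p i) ∧ ∑ i, p i = 1} := by
    refine ⟨⟨fun _ => (n : ℝ)⁻¹, fun _ => by positivity, ?_⟩⟩
    simp [Finset.sum_const, Finset.card_univ]
  have hPm : Nonempty {p' : Fin m → ℝ // (∀ i, 0 ≤ p' i) ∧ ∑ i, p' i = 1} := by
    refine ⟨⟨fun _ => (m : ℝ)⁻¹, fun _ => by positivity, ?_⟩⟩
    simp [Finset.sum_const, Finset.card_univ]
  have hQk : Nonempty {q : Fin k → ℝ // (∀ j, 0 ≤ q j) ∧ ∑ j, q j = 1} := by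
    refine ⟨⟨fun _ => (k : ℝ)⁻¹, fun _ => by positivity, ?_⟩⟩
    simp [Finset.sum_const, Finset.card_univ]
  -- a uniform bound for the RHS family
  set C : ℝ := ∑ i, ∑ j, |A i j| with hC
  have hbdd : BddAbove (Set.range fun p' : {p' : Fin m → ℝ // (∀ i, 0 ≤ p' i) ∧ ∑ i, p' i = 1} =>
      ⨅ q : {q : Fin k → ℝ // (∀ j, 0 ≤ q j) ∧ ∑ j, q j = 1},
        ∑ i, ∑ j, p'.1 i * A i j * q.1 j) := by
    refine ⟨C, ?_⟩
    rintro x ⟨p', rfl⟩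
    refine le_trans (ciInf_le ⟨-C, ?_⟩ hQk.some) ?_
    · rintro y ⟨q, rfl⟩
      have : |∑ i, ∑ j, p'.1 i * A i j * q.1 j| ≤ C := by
        calc |∑ i, ∑ j, p'.1 i * A i j * q.1 j|
            ≤ ∑ i, |∑ j, p'.1 i * A i j * q.1 j| := Finset.abs_sum_le_sum_abs _ _
          _ ≤ ∑ i, ∑ j, |p'.1 i * A i j * q.1 j| := by
              exact Finset.sum_le_sum fun i _ => Finset.abs_sum_le_sum_abs _ _
          _ ≤ ∑ i, ∑ j, |A i j| := by
              refine Finset.sum_le_sum fun i _ => Finset.sum_le_sum fun j _ => ?_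
              rw [abs_mul, abs_mul]
              have hp1 : |p'.1 i| ≤ 1 := by
                rw [abs_of_nonneg (p'.2.1 i)]
                calc p'.1 i ≤ ∑ l, p'.1 l :=
                      Finset.single_le_sum (fun l _ => p'.2.1 l) (Finset.mem_univ i)
                  _ = 1 := p'.2.2
              have hq1 : |q.1 j| ≤ 1 := by
                rw [abs_of_nonneg (q.2.1 j)]
                calc q.1 j ≤ ∑ l, q.1 l :=
                      Finset.single_le_sum (fun l _ => q.2.1 l) (Finset.mem_univ j)
                  _ = 1 := q.2.2
              calc |p'.1 i| * |A i j| * |q.1 j| ≤ 1 * |A i j| * 1 := by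
                    apply mul_le_mul (mul_le_mul hp1 le_rfl (abs_nonneg _) zero_le_one) hq1
                      (abs_nonneg _)
                    positivity
                _ = |A i j| := by ring
      linarith [abs_le.mp this]
    · set q := hQk.some
      have : |∑ i, ∑ j, p'.1 i * A i j * q.1 j| ≤ C := by
        calc |∑ i, ∑ j, p'.1 i * A i j * q.1 j|
            ≤ ∑ i, |∑ j, p'.1 i * A i j * q.1 j| := Finset.abs_sum_le_sum_abs _ _
          _ ≤ ∑ i, ∑ j, |p'.1 i * A i j * q.1 j| := by
              exact Finset.sum_le_sum fun i _ => Finset.abs_sum_le_sum_abs _ _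
          _ ≤ ∑ i, ∑ j, |A i j| := by
              refine Finset.sum_le_sum fun i _ => Finset.sum_le_sum fun j _ => ?_
              rw [abs_mul, abs_mul]
              have hp1 : |p'.1 i| ≤ 1 := by
                rw [abs_of_nonneg (p'.2.1 i)]
                calc p'.1 i ≤ ∑ l, p'.1 l :=
                      Finset.single_le_sum (fun l _ => p'.2.1 l) (Finset.mem_univ i)
                  _ = 1 := p'.2.2
              have hq1 : |q.1 j| ≤ 1 := by
                rw [abs_of_nonneg (q.2.1 j)]
                calc q.1 j ≤ ∑ l, q.1 l :=
                      Finset.single_le_sum (fun l _ => q.2.1 l) (Finset.mem_univ j)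
                  _ = 1 := q.2.2
              calc |p'.1 i| * |A i j| * |q.1 j| ≤ 1 * |A i j| * 1 := by
                    apply mul_le_mul (mul_le_mul hp1 le_rfl (abs_nonneg _) zero_le_one) hq1
                      (abs_nonneg _)
                    positivity
                _ = |A i j| := by ring
      linarith [abs_le.mp this]
  refine ciSup_le fun p => ?_
  -- define p' = Mᵀ p
  set p'f : Fin m → ℝ := fun l => ∑ i, p.1 i * M i l with hp'f
  have hp'0 : ∀ l, 0 ≤ p'f l := fun l =>
    Finset.sum_nonneg fun i _ => mul_nonneg (p.2.1 i) (hM0 i l)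
  have hp's : ∑ l, p'f l = 1 := by
    rw [Finset.sum_comm]
    calc ∑ i, ∑ l, p.1 i * M i l = ∑ i, p.1 i * ∑ l, M i l := by
          simp [Finset.mul_sum]
      _ = ∑ i, p.1 i := by simp [hM1]
      _ = 1 := p.2.2
  set p' : {p' : Fin m → ℝ // (∀ i, 0 ≤ p' i) ∧ ∑ i, p' i = 1} := ⟨p'f, hp'0, hp's⟩
  have key : ∀ q : {q : Fin k → ℝ // (∀ j, 0 ≤ q j) ∧ ∑ j, q j = 1},
      ∑ i, ∑ j, p.1 i * (M * A) i j * q.1 j = ∑ i, ∑ j, p'.1 i * A i j * q.1 j := by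
    intro q
    have e1 : (∑ i, ∑ j, p.1 i * (M * A) i j * q.1 j)
        = ∑ i, ∑ l, ∑ j, p.1 i * M i l * A l j * q.1 j := by
      refine Finset.sum_congr rfl fun i _ => ?_
      rw [Finset.sum_comm]
      refine Finset.sum_congr rfl fun j _ => ?_
      rw [Matrix.mul_apply, Finset.mul_sum, Finset.sum_mul]
      exact Finset.sum_congr rfl fun l _ => by ring
    have e2 : (∑ l, ∑ j, p'.1 l * A l j * q.1 j)
        = ∑ l, ∑ i, ∑ j, p.1 i * M i l * A l j * q.1 j := by
      refine Finset.sum_congr rfl fun l _ => ?_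
      rw [Finset.sum_comm]
      refine Finset.sum_congr rfl fun j _ => ?_
      show ((∑ i, p.1 i * M i l) * A l j * q.1 j) = _
      rw [Finset.sum_mul, Finset.sum_mul]
    rw [e1, e2]
    exact Finset.sum_comm ..

  have : (⨅ q : {q : Fin k → ℝ // (∀ j, 0 ≤ q j) ∧ ∑ j, q j = 1},
      ∑ i, ∑ j, p.1 i * (M * A) i j * q.1 j) =
      ⨅ q : {q : Fin k → ℝ // (∀ j, 0 ≤ q j) ∧ ∑ j, q j = 1},
      ∑ i, ∑ j, p'.1 i * A i j * q.1 j := by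
    exact iInf_congr key
  rw [this]
  exact le_ciSup hbdd p'
end

section
/- Let A be a real antisymmetric n × n matrix (Aᵀ = −A) and let p be a probability vector with (pᵀA)_j ≥ 0 for every j (a Nash equilibrium of the game on A). Then for every probability vector q, the vector b := qᵀA (i.e. b_j = Σ_i q_i A_{ij}) satisfies ⟨b, p⟩ ≤ 0. Consequently, any vector c ∈ ℝⁿ with ⟨c, p⟩ > 0 does not lie in the convex hull of the rows of A; adding an agent whose payoffs against the population are c strictly enlarges the empirical gamescape. -/
open Matrix

/-- Proposition 5: against a Nash equilibrium `p` of an antisymmetric game, every convex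
mixture of rows yields nonpositive payoff, so any payoff vector `c` with `⟨c,p⟩ > 0`
lies outside the convex hull of the rows: adding such an agent strictly enlarges the
empirical gamescape. -/
theorem beating_nash_enlarges_gamescape {n : ℕ}
    (A : Matrix (Fin n) (Fin n) ℝ) (hA : Aᵀ = -A)
    (p : Fin n → ℝ) (hp0 : ∀ i, 0 ≤ p i) (hp1 : ∑ i, p i = 1)
    (hNash : ∀ j, 0 ≤ ∑ i, p i * A i j) :
    (∀ q : Fin n → ℝ, (∀ i, 0 ≤ q i) → (∑ i, q i = 1) →
      ∑ j, (∑ i, q i * A i j) * p j ≤ 0) ∧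
    (∀ c : Fin n → ℝ, 0 < ∑ j, c j * p j → c ∉ convexHull ℝ (Set.range A)) := by
  have hrow : ∀ i, ∑ j, A i j * p j ≤ 0 := by
    intro i
    have h1 : ∑ j, A i j * p j = -(∑ j, p j * A j i) := by
      rw [← Finset.sum_neg_distrib]
      apply Finset.sum_congr rfl
      intro j _
      have : A i j = -A j i := by
        have := congrFun (congrFun hA j) i
        simpa [Matrix.transpose_apply] using this
      rw [this]; ring
    rw [h1]
    simpa using hNash i
  have hlin : IsLinearMap ℝ (fun c : Fin n → ℝ => ∑ j, c j * p j) := by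
    constructor
    · intro x y; simp [add_mul, Finset.sum_add_distrib]
    · intro a x; simp [Finset.mul_sum, mul_assoc]
  have hhull : convexHull ℝ (Set.range A) ⊆ {c : Fin n → ℝ | ∑ j, c j * p j ≤ 0} := by
    apply convexHull_min
    · rintro c ⟨i, rfl⟩
      exact hrow i
    · exact convex_halfSpace_le hlin 0
  constructor
  · intro q hq0 hq1
    have : ∑ j, (∑ i, q i * A i j) * p j = ∑ i, q i * ∑ j, A i j * p j := by
      simp only [Finset.sum_mul, Finset.mul_sum]
      rw [Finset.sum_comm]
      simp [mul_assoc]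
    rw [this]
    apply Finset.sum_nonpos
    intro i _
    exact mul_nonpos_of_nonneg_of_nonpos (hq0 i) (hrow i)
  · intro c hc hmem
    have := hhull hmem
    simp only [Set.mem_setOf_eq] at this
    linarith
end

section
/- Let A be a real antisymmetric n × n matrix (A_{ij} = −A_{ji}) and let p be a probability vector with (pᵀA)_j ≥ 0 for every j (a Nash equilibrium). Define the Nash-reweighted matrix B by B_{ij} = A_{ij} · p_i · p_j. Then (i) B is antisymmetric, and (ii) every row and every column of B sums to zero: Σ_j B_{ij} = 0 and Σ_j B_{ji} = 0 for all i. -/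
/-- Nash-reweighting lemma: the Nash-reweighted matrix `B_{ij} = A_{ij} p_i p_j` is
antisymmetric and all its rows and columns sum to zero. -/
theorem nash_reweighted_rows_sum_zero {n : ℕ}
    (A : Matrix (Fin n) (Fin n) ℝ) (hA : ∀ i j, A i j = - A j i)
    (p : Fin n → ℝ) (hp0 : ∀ i, 0 ≤ p i) (hp1 : ∑ i, p i = 1)
    (hNash : ∀ j, 0 ≤ ∑ i, p i * A i j) :
    let B : Matrix (Fin n) (Fin n) ℝ := fun i j => A i j * p i * p j
    (∀ i j, B i j = - B j i) ∧
    (∀ i, ∑ j, B i j = 0) ∧ (∀ i, ∑ j, B j i = 0) := by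
  intro B
  have hS : ∑ i, ∑ j, p i * (p j * A j i) = 0 := by
    have hswap : ∑ i, ∑ j, p i * (p j * A j i)
        = ∑ j, ∑ i, p i * (p j * A j i) := Finset.sum_comm
    have hneg : ∑ j, ∑ i, p i * (p j * A j i)
        = - ∑ i, ∑ j, p i * (p j * A j i) := by
      rw [← Finset.sum_neg_distrib]
      refine Finset.sum_congr rfl fun j _ => ?_
      rw [← Finset.sum_neg_distrib]
      refine Finset.sum_congr rfl fun i _ => ?_
      rw [hA j i]; ring
    linarith [hswap, hneg]
  have key : ∀ i, p i * ∑ j, p j * A j i = 0 := by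
    have h0 : ∀ i ∈ Finset.univ, (0:ℝ) ≤ p i * ∑ j, p j * A j i :=
      fun i _ => mul_nonneg (hp0 i) (hNash i)
    have hsum : ∑ i, p i * ∑ j, p j * A j i = 0 := by
      rw [← hS]; exact Finset.sum_congr rfl fun i _ => Finset.mul_sum _ _ _
    intro i
    exact (Finset.sum_eq_zero_iff_of_nonneg h0).mp hsum i (Finset.mem_univ i)
  refine ⟨fun i j => by simp only [B]; rw [hA i j]; ring, fun i => ?_, fun i => ?_⟩
  · have : ∑ j, B i j = - (p i * ∑ j, p j * A j i) := by
      rw [Finset.mul_sum, ← Finset.sum_neg_distrib]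
      refine Finset.sum_congr rfl fun j _ => ?_
      simp only [B]; rw [hA i j]; ring
    rw [this, key i, neg_zero]
  · have : ∑ j, B j i = p i * ∑ j, p j * A j i := by
      rw [Finset.mul_sum]
      refine Finset.sum_congr rfl fun j _ => ?_
      simp only [B]; ring
    rw [this, key i]
end

section
/- Let A be a real antisymmetric n × n matrix (A_{ij} = −A_{ji}), let p be a probability vector with (pᵀA)_j ≥ 0 for every j (a Nash equilibrium), and let a be an index with p_a > 0. Partition the indices into S₁ = {a}, S₂ = {i : A_{a,i} > 0}, and S₃ = {i : i ≠ a and A_{a,i} ≤ 0}, and define the 3 × 3 aggregated matrix B by B_{kl} = Σ_{i ∈ S_k} Σ_{j ∈ S_l} p_i p_j A_{ij}. Then there exists α ≥ 0 such that B₁₂ = B₂₃ = B₃₁ = α, B₂₁ = B₃₂ = B₁₃ = −α, and the diagonal of B is zero, where α = Σ_{j ∈ S₂} p_a p_j A_{a,j}; moreover α > 0 whenever there exists j with p_j > 0 and A_{a,j} > 0. That is, the aggregated meta-game is a rock-paper-scissors game. -/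
/-- Rock-paper-scissors reduction: aggregating the Nash-reweighted evaluation matrix
over the blocks {a}, {agents a beats}, {agents that beat or tie a} yields a
rock-paper-scissors meta-game. -/
theorem rps_reduction {n : ℕ}
    (A : Matrix (Fin n) (Fin n) ℝ) (hA : ∀ i j, A i j = - A j i)
    (p : Fin n → ℝ) (hp0 : ∀ i, 0 ≤ p i) (hp1 : ∑ i, p i = 1)
    (hNash : ∀ j, 0 ≤ ∑ i, p i * A i j)
    (a : Fin n) (ha : 0 < p a) :
    let S : Fin 3 → Finset (Fin n) :=
      ![{a}, Finset.univ.filter (fun i => 0 < A a i),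
        Finset.univ.filter (fun i => i ≠ a ∧ A a i ≤ 0)]
    let B : Matrix (Fin 3) (Fin 3) ℝ :=
      fun k l => ∑ i ∈ S k, ∑ j ∈ S l, p i * p j * A i j
    ∃ α : ℝ, 0 ≤ α ∧
      α = ∑ j ∈ S 1, p a * p j * A a j ∧
      B 0 1 = α ∧ B 1 2 = α ∧ B 2 0 = α ∧
      B 1 0 = -α ∧ B 2 1 = -α ∧ B 0 2 = -α ∧
      B 0 0 = 0 ∧ B 1 1 = 0 ∧ B 2 2 = 0 ∧
      ((∃ j, 0 < p j ∧ 0 < A a j) → 0 < α) := by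
  intro S B
  have hS0 : S 0 = {a} := rfl
  have hS1 : S 1 = Finset.univ.filter (fun i => 0 < A a i) := rfl
  have hS2 : S 2 = Finset.univ.filter (fun i => i ≠ a ∧ A a i ≤ 0) := rfl
  have hAaa : ∀ i, A i i = 0 := fun i => by have := hA i i; linarith
  -- the three blocks partition the index set
  have hsplit : ∀ f : Fin n → ℝ,
      ∑ i, f i = f a + ∑ i ∈ S 1, f i + ∑ i ∈ S 2, f i := by
    intro f
    have hdisj : Disjoint (S 1) (S 2) := by
      rw [hS1, hS2, Finset.disjoint_left]
      intro i h1 h2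
      simp only [Finset.mem_filter] at h1 h2
      linarith [h1.2, h2.2.2]
    have hna1 : a ∉ S 1 := by simp [hS1, hAaa a]
    have hna2 : a ∉ S 2 := by simp [hS2]
    have hcover : (Finset.univ : Finset (Fin n)) = insert a (S 1 ∪ S 2) := by
      ext i
      simp only [Finset.mem_univ, Finset.mem_insert, Finset.mem_union, hS1, hS2,
        Finset.mem_filter, true_and, true_iff]
      by_cases hi : i = a
      · exact Or.inl hi
      · rcases lt_or_ge 0 (A a i) with h | h
        · exact Or.inr (Or.inl h)
        · exact Or.inr (Or.inr ⟨hi, h⟩)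
    rw [hcover, Finset.sum_insert (by simp [hna1, hna2]), Finset.sum_union hdisj]
    ring
  -- complementary slackness
  have hterm : ∀ i j, p j * p i * A j i = -(p i * p j * A i j) := by
    intro i j; rw [hA j i]; ring
  have htot : (∑ j, p j * ∑ i, p i * A i j) = 0 := by
    have h1 : (∑ j, p j * ∑ i, p i * A i j) = ∑ j, ∑ i, p i * p j * A i j := by
      apply Finset.sum_congr rfl; intro j _
      rw [Finset.mul_sum]; apply Finset.sum_congr rfl; intro i _; ring
    have h2 : (∑ j : Fin n, ∑ i : Fin n, p i * p j * A i j)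
        = -(∑ j : Fin n, ∑ i : Fin n, p i * p j * A i j) := by
      conv_lhs => rw [Finset.sum_comm]
      rw [← Finset.sum_neg_distrib]
      apply Finset.sum_congr rfl; intro i _
      rw [← Finset.sum_neg_distrib]
      apply Finset.sum_congr rfl; intro j _
      exact hterm j i
    rw [h1]; linarith
  have hcs : ∀ j, p j * ∑ i, p i * A i j = 0 := by
    intro j
    have := (Finset.sum_eq_zero_iff_of_nonneg
      (fun j _ => mul_nonneg (hp0 j) (hNash j))).mp htot
    exact this j (Finset.mem_univ j)
  -- antisymmetry of B
  have hBanti : ∀ k l, B l k = - B k l := by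
    intro k l
    show (∑ i ∈ S l, ∑ j ∈ S k, p i * p j * A i j)
        = -(∑ i ∈ S k, ∑ j ∈ S l, p i * p j * A i j)
    rw [Finset.sum_comm]
    rw [← Finset.sum_neg_distrib]
    apply Finset.sum_congr rfl; intro i _
    rw [← Finset.sum_neg_distrib]
    apply Finset.sum_congr rfl; intro j _
    exact hterm i j
  have hBdiag : ∀ k, B k k = 0 := fun k => by have := hBanti k k; linarith
  -- column sums vanish
  have hcol : ∀ l, B 0 l + B 1 l + B 2 l = 0 := by
    intro l
    have h := hsplit (fun i => ∑ j ∈ S l, p i * p j * A i j)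
    have hB0 : B 0 l = ∑ j ∈ S l, p a * p j * A a j := by
      show (∑ i ∈ ({a} : Finset (Fin n)), ∑ j ∈ S l, p i * p j * A i j) = _
      rw [Finset.sum_singleton]
    have hall : (∑ i, ∑ j ∈ S l, p i * p j * A i j) = 0 := by
      rw [Finset.sum_comm]
      apply Finset.sum_eq_zero
      intro j _
      have hj := hcs j
      have : (∑ i, p i * p j * A i j) = p j * ∑ i, p i * A i j := by
        rw [Finset.mul_sum]; apply Finset.sum_congr rfl; intro i _; ring
      rw [this, hj]
    show (∑ i ∈ S 0, ∑ j ∈ S l, p i * p j * A i j) + B 1 l + B 2 l = 0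
    rw [hS0, Finset.sum_singleton]
    have hB1 : B 1 l = ∑ i ∈ S 1, ∑ j ∈ S l, p i * p j * A i j := rfl
    have hB2 : B 2 l = ∑ i ∈ S 2, ∑ j ∈ S l, p i * p j * A i j := rfl
    rw [hB1, hB2]
    linarith [h, hall]
  set α : ℝ := ∑ j ∈ S 1, p a * p j * A a j with hα
  have hα0 : 0 ≤ α := by
    apply Finset.sum_nonneg
    intro j hj
    rw [hS1, Finset.mem_filter] at hj
    exact mul_nonneg (mul_nonneg (hp0 a) (hp0 j)) hj.2.le
  have hB01 : B 0 1 = α := by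
    show (∑ i ∈ ({a} : Finset (Fin n)), ∑ j ∈ S 1, p i * p j * A i j) = α
    rw [Finset.sum_singleton]
  have hB10 : B 1 0 = -α := by rw [hBanti 0 1, hB01]
  have hB21 : B 2 1 = -α := by
    have := hcol 1; have := hBdiag 1; linarith [hB01]
  have hB12 : B 1 2 = α := by have := hBanti 1 2; rw [hB21] at this; linarith
  have hB20 : B 2 0 = α := by
    have := hcol 0; have := hBdiag 0; linarith [hB10]
  have hB02 : B 0 2 = -α := by have := hBanti 2 0; rw [hB20] at this; linarith
  refine ⟨α, hα0, rfl, hB01, hB12, hB20, hB10, hB21, hB02,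
    hBdiag 0, hBdiag 1, hBdiag 2, ?_⟩
  rintro ⟨j, hpj, hAj⟩
  apply Finset.sum_pos'
  · intro i hi
    rw [hS1, Finset.mem_filter] at hi
    exact mul_nonneg (mul_nonneg (hp0 a) (hp0 i)) hi.2.le
  · exact ⟨j, by rw [hS1]; simp [hAj],
      mul_pos (mul_pos ha hpj) hAj⟩
end

section
/- Let A be a real antisymmetric n × n matrix (Aᵀ = −A) of rank r. Then (i) r is even, and (ii) there exist matrices G of size n × r and W of size n × r with orthonormal columns (Wᵀ W = I_r) such that A = G · Wᵀ. Consequently the convex hull of the rows of A (the empirical gamescape) is the image, under the injective linear map y ↦ y Wᵀ, of the convex hull of the rows of G, a polytope in ℝʳ; i.e. the empirical gamescape of n agents can be represented in ℝʳ. -/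
open Matrix

section helper
variable {n r : ℕ}

noncomputable def Wmat (S : Submodule ℝ (EuclideanSpace ℝ (Fin n))) (hr : Module.finrank ℝ S = r) :
    Matrix (Fin n) (Fin r) ℝ :=
  fun i k => ((stdOrthonormalBasis ℝ S).reindex (finCongr hr) k : EuclideanSpace ℝ (Fin n)) i

lemma Wmat_orth (S : Submodule ℝ (EuclideanSpace ℝ (Fin n))) (hr : Module.finrank ℝ S = r) :
    (Wmat S hr)ᵀ * (Wmat S hr) = 1 := by
  ext k l
  have h := ((stdOrthonormalBasis ℝ S).reindex (finCongr hr)).orthonormal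
  have h2 := orthonormal_iff_ite.mp h k l
  rw [Submodule.coe_inner, PiLp.inner_apply] at h2
  simp only [RCLike.inner_apply, starRingEnd_apply, star_trivial] at h2
  simp only [Matrix.mul_apply, Matrix.one_apply, transpose_apply, Wmat]
  rw [← h2]
  exact Finset.sum_congr rfl fun _ _ => mul_comm _ _

lemma Wmat_range (S : Submodule ℝ (EuclideanSpace ℝ (Fin n))) (hr : Module.finrank ℝ S = r)
    (x : Fin n → ℝ) : WithLp.toLp 2 x ∈ S ↔ ∃ d : Fin r → ℝ, (Wmat S hr) *ᵥ d = x := by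
  set b := (stdOrthonormalBasis ℝ S).reindex (finCongr hr) with hb
  have key : ∀ d : Fin r → ℝ,
      (Wmat S hr) *ᵥ d = ((∑ k, d k • b k : S) : EuclideanSpace ℝ (Fin n)) := by
    intro d
    funext i
    push_cast
    simp [Matrix.mulVec, dotProduct, Wmat, hb, mul_comm]
  constructor
  · intro hx
    exact ⟨fun k => b.repr ⟨WithLp.toLp 2 x, hx⟩ k, by rw [key, b.sum_repr ⟨WithLp.toLp 2 x, hx⟩]⟩
  · rintro ⟨d, rfl⟩
    rw [key]
    exact (∑ k, d k • b k : S).2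

end helper

/-- Proposition 2: an antisymmetric matrix has even rank `r` and factorizes as
`A = G·Wᵀ` with `W` having orthonormal columns; consequently the empirical gamescape
(convex hull of the rows of `A`) is the image of an `r`-dimensional polytope under an
injective linear map. -/
theorem egs_low_dim_representation {n : ℕ}
    (A : Matrix (Fin n) (Fin n) ℝ) (hA : Aᵀ = -A) :
    Even A.rank ∧
    ∃ (G : Matrix (Fin n) (Fin A.rank) ℝ) (W : Matrix (Fin n) (Fin A.rank) ℝ),
      Wᵀ * W = 1 ∧
      A = G * Wᵀ ∧
      Function.Injective (fun y : Fin A.rank → ℝ => Matrix.vecMul y Wᵀ) ∧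
      convexHull ℝ (Set.range A) =
        (fun y : Fin A.rank → ℝ => Matrix.vecMul y Wᵀ) '' convexHull ℝ (Set.range G) := by
  set r := A.rank with hrdef
  let S : Submodule ℝ (EuclideanSpace ℝ (Fin n)) :=
    (LinearMap.range A.mulVecLin).comap (WithLp.linearEquiv 2 ℝ (Fin n → ℝ)).toLinearMap
  have hr : Module.finrank ℝ S = r := by
    have h := LinearEquiv.finrank_map_eq (WithLp.linearEquiv 2 ℝ (Fin n → ℝ)).symm
      (LinearMap.range A.mulVecLin)
    rw [← Submodule.comap_equiv_eq_map_symm] at h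
    exact h
  set W := Wmat S hr with hWdef
  have hWW : Wᵀ * W = 1 := Wmat_orth S hr
  have hSW : ∀ x : Fin n → ℝ, WithLp.toLp 2 x ∈ S ↔ ∃ d, W *ᵥ d = x := Wmat_range S hr
  have hmem : ∀ v : Fin n → ℝ, WithLp.toLp 2 (A *ᵥ v) ∈ S := fun v => ⟨v, rfl⟩
  -- recover the vector from `W *ᵥ d`
  have hWinj : ∀ d : Fin r → ℝ, Wᵀ *ᵥ (W *ᵥ d) = d := by
    intro d
    rw [Matrix.mulVec_mulVec, hWW, Matrix.one_mulVec]
  -- projection fixes S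
  have hproj : ∀ x : Fin n → ℝ, WithLp.toLp 2 x ∈ S → (W * Wᵀ) *ᵥ x = x := by
    intro x hx
    obtain ⟨d, rfl⟩ := (hSW x).mp hx
    rw [Matrix.mulVec_mulVec, Matrix.mul_assoc, hWW, Matrix.mul_one]
  -- the key killer lemma: x ∈ S and Wᵀ x = 0 forces x = 0
  have hker : ∀ x : Fin n → ℝ, WithLp.toLp 2 x ∈ S → Wᵀ *ᵥ x = 0 → x = 0 := by
    intro x hx h0
    obtain ⟨d, rfl⟩ := (hSW x).mp hx
    rw [hWinj d] at h0
    rw [h0, Matrix.mulVec_zero]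
  -- columns of A lie in S
  have hcol : ∀ j, WithLp.toLp 2 (fun i => A i j) ∈ S := by
    intro j
    refine ⟨Pi.single j 1, ?_⟩
    show A *ᵥ Pi.single j 1 = _
    funext i
    simp [Matrix.mulVec_single]
  have hWWA : W * Wᵀ * A = A := by
    ext i j
    have := congrFun (hproj _ (hcol j)) i
    simpa [Matrix.mul_apply, Matrix.mulVec, dotProduct] using this
  have hAWW : A * (W * Wᵀ) = A := by
    have h1 := congrArg Matrix.transpose hWWA
    rw [Matrix.transpose_mul, Matrix.transpose_mul, Matrix.transpose_transpose, hA,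
      Matrix.neg_mul] at h1
    exact neg_injective h1
  -- the factorization
  have hGW : A = (A * W) * Wᵀ := by rw [Matrix.mul_assoc, hAWW]
  -- evenness
  have heven : Even r := by
    set C : Matrix (Fin r) (Fin r) ℝ := Wᵀ * A * W with hCdef
    have hCT : Cᵀ = -C := by
      rw [hCdef, Matrix.transpose_mul, Matrix.transpose_mul, Matrix.transpose_transpose, hA]
      simp [Matrix.neg_mul, Matrix.mul_neg, Matrix.mul_assoc]
    have hdet : C.det ≠ 0 := by
      intro h0
      obtain ⟨v, hv, hCv⟩ := (Matrix.exists_mulVec_eq_zero_iff).mpr h0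
      have hCv' : Wᵀ *ᵥ (A *ᵥ (W *ᵥ v)) = 0 := by
        rw [Matrix.mulVec_mulVec, Matrix.mulVec_mulVec]
        exact hCv
      set u : Fin n → ℝ := W *ᵥ v with hu
      have hAu : A *ᵥ u = 0 := hker _ (hmem u) hCv'
      have huS : WithLp.toLp 2 u ∈ S := (hSW u).mpr ⟨v, rfl⟩
      obtain ⟨t, ht⟩ := huS
      have ht' : A *ᵥ t = u := ht
      have huu : u ⬝ᵥ u = 0 := by
        calc u ⬝ᵥ u = (A *ᵥ t) ⬝ᵥ u := by rw [ht']
          _ = u ⬝ᵥ (A *ᵥ t) := dotProduct_comm _ _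
          _ = (u ᵥ* A) ⬝ᵥ t := Matrix.dotProduct_mulVec _ _ _
          _ = (Aᵀ *ᵥ u) ⬝ᵥ t := by rw [Matrix.mulVec_transpose]
          _ = 0 := by rw [hA, Matrix.neg_mulVec, hAu, neg_zero, zero_dotProduct]
      have hu0 : u = 0 := dotProduct_self_eq_zero.mp huu
      have : v = 0 := by
        have := hWinj v
        rw [← hu, hu0, Matrix.mulVec_zero] at this
        exact this.symm
      exact hv this
    rcases Nat.even_or_odd r with he | ho
    · exact he
    · exfalso
      have h1 : C.det = -C.det := by
        conv_lhs => rw [← Matrix.det_transpose, hCT]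
        rw [Matrix.det_neg, Fintype.card_fin, ho.neg_one_pow, neg_one_mul]
      exact hdet (by linarith)
  refine ⟨heven, A * W, W, hWW, hGW, ?_, ?_⟩
  · intro y1 y2 h
    have h2 := congrArg (fun z => z ᵥ* W) h
    simpa [Matrix.vecMul_vecMul, hWW, Matrix.vecMul_one] using h2
  · have hrows : ∀ i, A i = (A * W) i ᵥ* Wᵀ := by
      intro i
      funext j
      conv_lhs => rw [hGW]
      simp [Matrix.mul_apply, Matrix.vecMul, dotProduct]
    have himg : Set.range A = (fun y : Fin r → ℝ => y ᵥ* Wᵀ) '' Set.range (A * W) := by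
      refine Eq.trans ?_ (Set.range_comp _ _)
      rw [show ((fun y : Fin r → ℝ => y ᵥ* Wᵀ) ∘ (A * W)) = A from funext fun i => (hrows i).symm]
    rw [himg]
    exact ((Wᵀ).vecMulLinear.image_convexHull (Set.range (A * W))).symm
end

section
/- Let n ≥ 3 and define the real n × n matrix C by C_{ij} = 1 if j ≡ i+1 (mod n), C_{ij} = −1 if j ≡ i−1 (mod n), and C_{ij} = 0 otherwise (so C is the antisymmetric evaluation matrix of n agents forming a single long cycle in which each agent beats the next). Then the rank of C equals n−2 if n is even and n−1 if n is odd. -/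
/-- Example 3: the evaluation matrix of `n ≥ 3` agents forming a single long cycle has
rank `n−2` if `n` is even and `n−1` if `n` is odd. -/
theorem long_cycle_rank {n : ℕ} (hn : 3 ≤ n)
    (C : Matrix (Fin n) (Fin n) ℝ)
    (hC : ∀ i j : Fin n,
      C i j = if (j : ℕ) = ((i : ℕ) + 1) % n then 1
        else if (i : ℕ) = ((j : ℕ) + 1) % n then -1 else 0) :
    C.rank = if Even n then n - 2 else n - 1 := by
  obtain ⟨m, rfl⟩ : ∃ m, n = m + 3 := ⟨n - 3, by omega⟩
  have hval1 : ∀ i : Fin (m+3), ((i + 1 : Fin (m+3)) : ℕ) = ((i : ℕ) + 1) % (m+3) := by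
    intro i; rw [Fin.add_def]; rfl
  have htwo : ((2 : Fin (m+3)) : ℕ) = 2 := rfl
  have h2ne : (2 : Fin (m+3)) ≠ 0 := by
    intro h
    have := congrArg Fin.val h
    simp [htwo] at this
    rw [Nat.mod_eq_of_lt (by omega : 2 < m+3)] at this; omega
  have hform : ∀ i j : Fin (m+3),
      C i j = (if j = i + 1 then (1:ℝ) else 0) - (if j = i - 1 then 1 else 0) := by
    intro i j
    rw [hC]
    have h1 : ((j : ℕ) = ((i : ℕ) + 1) % (m+3)) ↔ j = i + 1 := by
      rw [Fin.ext_iff, hval1]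
    have h2 : ((i : ℕ) = ((j : ℕ) + 1) % (m+3)) ↔ j = i - 1 := by
      rw [show ((j:ℕ) + 1) % (m+3) = ((j + 1 : Fin (m+3)):ℕ) from (hval1 j).symm, ← Fin.ext_iff,
        eq_sub_iff_add_eq]
      exact eq_comm
    simp only [h1, h2]
    have hne : i + 1 ≠ i - 1 := by
      intro h
      have h' : i + 2 = i := by
        have := congrArg (· + 1) h
        simp only [add_assoc, sub_add_cancel, one_add_one_eq_two] at this
        exact this
      exact h2ne (by simpa using h')
    by_cases ha : j = i + 1 <;> by_cases hb : j = i - 1 <;> simp_all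
  have hmv : ∀ (x : Fin (m+3) → ℝ) (i : Fin (m+3)), C.mulVec x i = x (i + 1) - x (i - 1) := by
    intro x i
    simp only [Matrix.mulVec, dotProduct, hform, sub_mul, one_mul, zero_mul,
      Finset.sum_sub_distrib, ite_mul]
    rw [Finset.sum_ite_eq' Finset.univ (i+1) x, Finset.sum_ite_eq' Finset.univ (i-1) x]
    simp
  have hker : ∀ x : Fin (m+3) → ℝ, x ∈ LinearMap.ker C.mulVecLin ↔
      ∀ i : Fin (m+3), x (i + 2) = x i := by
    intro x
    rw [LinearMap.mem_ker]
    have hmvl : C.mulVecLin x = fun i => x (i + 1) - x (i - 1) := by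
      funext i; rw [Matrix.mulVecLin_apply, hmv]
    rw [hmvl]
    letI : CommRing (Fin (m+3)) := Fin.instCommRing (m+3)
    constructor
    · intro h i
      have := congrFun h (i + 1)
      simp only [Pi.zero_apply, sub_eq_zero] at this
      rw [show i + 1 + 1 = i + 2 by ring, show i + 1 - 1 = i by ring] at this
      exact this
    · intro h
      funext i
      have := h (i - 1)
      rw [show i - 1 + 2 = i + 1 by ring] at this
      simp [this]
  have hrn := LinearMap.finrank_range_add_finrank_ker C.mulVecLin
  rw [Module.finrank_fin_fun] at hrn
  have hrank : C.rank = Module.finrank ℝ (LinearMap.range C.mulVecLin) := rfl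
  by_cases hev : Even (m+3)
  · -- kernel has dimension 2
    have hm2 : (m+3) % 2 = 0 := Nat.even_iff.mp hev
    -- any kernel element is determined by parity
    have hpar : ∀ x ∈ LinearMap.ker C.mulVecLin, ∀ j : Fin (m+3),
        x j = if (j : ℕ) % 2 = 0 then x 0 else x 1 := by
      intro x hx j
      rw [hker] at hx
      have step : ∀ k, ∀ (hk : k < m+3),
          x ⟨k, hk⟩ = if k % 2 = 0 then x 0 else x 1 := by
        intro k
        induction k using Nat.strong_induction_on with
        | _ k ih =>
          intro hk
          rcases lt_or_ge k 2 with hk2 | hk2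
          · interval_cases k
            · simp [show (⟨0, hk⟩ : Fin (m+3)) = 0 from rfl]
            · simp [show (⟨1, hk⟩ : Fin (m+3)) = 1 from rfl]
          · have hk2' : k - 2 < m + 3 := by omega
            have hadd : (⟨k-2, hk2'⟩ : Fin (m+3)) + 2 = ⟨k, hk⟩ := by
              rw [Fin.add_def]
              apply Fin.ext
              simp only [htwo]
              show (k - 2 + 2) % (m+3) = k
              rw [Nat.sub_add_cancel hk2, Nat.mod_eq_of_lt hk]
            have := hx ⟨k-2, hk2'⟩
            rw [hadd] at this
            rw [this, ih (k-2) (by omega) hk2',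
              show (k-2) % 2 = k % 2 by omega]
      have := step j.val j.isLt
      rwa [Fin.eta] at this
    -- the evaluation-at-(0,1) map
    let φ : LinearMap.ker C.mulVecLin →ₗ[ℝ] ℝ × ℝ :=
      LinearMap.prod ((LinearMap.proj 0).comp (Submodule.subtype _))
        ((LinearMap.proj 1).comp (Submodule.subtype _))
    have hφinj : Function.Injective φ := by
      rw [injective_iff_map_eq_zero]
      intro x hx0
      have h0 : x.1 0 = 0 := congrArg Prod.fst hx0
      have h1 : x.1 1 = 0 := congrArg Prod.snd hx0
      apply Subtype.ext
      funext j
      rw [hpar x.1 x.2 j, h0, h1]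
      simp
    have hφsurj : Function.Surjective φ := by
      rintro ⟨a, b⟩
      set y : Fin (m+3) → ℝ := fun j => if (j : ℕ) % 2 = 0 then a else b with hy
      have hymem : y ∈ LinearMap.ker C.mulVecLin := by
        rw [hker]
        intro i
        simp only [hy]
        congr 1
        have hval : ((i + 2 : Fin (m+3)) : ℕ) = ((i : ℕ) + 2) % (m+3) := by
          rw [Fin.add_def, htwo]
        rw [hval]
        have hi := i.isLt
        rcases lt_or_ge ((i:ℕ) + 2) (m+3) with hlt | hge
        · rw [Nat.mod_eq_of_lt hlt]
          simp [Nat.add_mod]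
        · have : ((i:ℕ) + 2) % (m+3) = (i:ℕ) + 2 - (m+3) := by
            rw [Nat.mod_eq_sub_mod hge, Nat.mod_eq_of_lt (by omega)]
          rw [this]
          have : ((i:ℕ) + 2 - (m+3)) % 2 = (i:ℕ) % 2 := by omega
          rw [this]
      refine ⟨⟨y, hymem⟩, ?_⟩
      show (y 0, y 1) = (a, b)
      simp [hy, show ((1 : Fin (m+3)) : ℕ) = 1 from rfl, show ((0 : Fin (m+3)) : ℕ) = 0 from rfl]
    have hkd : Module.finrank ℝ (LinearMap.ker C.mulVecLin) = 2 := by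
      rw [(LinearEquiv.ofBijective φ ⟨hφinj, hφsurj⟩).finrank_eq]
      simp
    rw [if_pos hev, hrank]
    omega
  · -- kernel has dimension 1
    have hm2 : (m+3) % 2 = 1 := Nat.not_even_iff.mp hev
    have hconst : ∀ x ∈ LinearMap.ker C.mulVecLin, ∀ j : Fin (m+3), x j = x 0 := by
      intro x hx j
      rw [hker] at hx
      letI : CommRing (Fin (m+3)) := Fin.instCommRing (m+3)
      have step : ∀ (k : ℕ) (i : Fin (m+3)), x (i + (2 * k : ℕ)) = x i := by
        intro k
        induction k with
        | zero => intro i; simp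
        | succ k ih =>
          intro i
          have hcast : ((2 * (k+1) : ℕ) : Fin (m+3)) = ((2 * k : ℕ) : Fin (m+3)) + 2 := by
            push_cast
            ring
          rw [hcast, ← add_assoc, hx, ih]
      have e1 : 2 * (j.val * ((m+4)/2)) = j.val * (m+4) := by
        have : 2 * ((m+4)/2) = m+4 := by omega
        calc 2 * (j.val * ((m+4)/2)) = j.val * (2 * ((m+4)/2)) := by ring
          _ = j.val * (m+4) := by rw [this]
      have e2 : ((j.val * (m+4) : ℕ) : Fin (m+3)) = j := by
        rw [Nat.cast_mul,
          show ((m+4 : ℕ) : Fin (m+3)) = ((m+3 : ℕ) : Fin (m+3)) + 1 by rw [show m + 4 = (m+3) + 1 from rfl, Nat.cast_add, Nat.cast_one],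
          Fin.natCast_self, zero_add, mul_one, Fin.cast_val_eq_self]
      have := step (j.val * ((m+4)/2)) 0
      rw [e1, e2, zero_add] at this
      exact this
    let ψ : LinearMap.ker C.mulVecLin →ₗ[ℝ] ℝ :=
      (LinearMap.proj 0).comp (Submodule.subtype _)
    have hψinj : Function.Injective ψ := by
      rw [injective_iff_map_eq_zero]
      intro x hx0
      apply Subtype.ext
      funext j
      rw [hconst x.1 x.2 j]
      exact hx0
    have hψsurj : Function.Surjective ψ := by
      intro a
      have hmem : (fun _ : Fin (m+3) => a) ∈ LinearMap.ker C.mulVecLin := by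
        rw [hker]; intro i; rfl
      exact ⟨⟨fun _ => a, hmem⟩, rfl⟩
    have hkd : Module.finrank ℝ (LinearMap.ker C.mulVecLin) = 1 := by
      rw [(LinearEquiv.ofBijective ψ ⟨hψinj, hψsurj⟩).finrank_eq]
      simp
    rw [if_neg hev, hrank]
    omega
end

section
/- Let A be a real antisymmetric m × m matrix, M a real n × m row-stochastic matrix (nonnegative entries, each row summing to 1), N the (m+n) × m matrix formed by stacking the identity I_m on top of M, and A_Q := N · A · Nᵀ the evaluation matrix of the population enlarged by n redundant agents. Then (i) the convex hull of the rows of A_Q equals the image of the convex hull of the rows of A under the injective linear map x ↦ x · Nᵀ, and (ii) the image of the convex hull of the rows of A_Q under the projection onto the first m coordinates equals the convex hull of the rows of A. Hence the empirical gamescape is invariant to redundant agents. -/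
open Matrix

/-- Proposition 1: the empirical gamescape is invariant to redundant agents. If the
population is enlarged by agents that are convex mixtures (given by a row-stochastic
`M`) of existing agents, the convex hull of the rows of the enlarged evaluation matrix
`A_Q = N·A·Nᵀ` (with `N = [I; M]`) is the image of the original gamescape under an
injective linear map, and projecting back onto the original coordinates recovers the
original gamescape. -/
theorem egs_invariant_to_redundant_agents {m n : ℕ}
    (A : Matrix (Fin m) (Fin m) ℝ) (hA : Aᵀ = -A)
    (M : Matrix (Fin n) (Fin m) ℝ)
    (hM0 : ∀ i j, 0 ≤ M i j) (hM1 : ∀ i, ∑ j, M i j = 1) :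
    let N : Matrix (Fin m ⊕ Fin n) (Fin m) ℝ := Matrix.fromRows 1 M
    let AQ : Matrix (Fin m ⊕ Fin n) (Fin m ⊕ Fin n) ℝ := N * A * Nᵀ
    Function.Injective (fun x : Fin m → ℝ => Matrix.vecMul x Nᵀ) ∧
    convexHull ℝ (Set.range AQ) =
      (fun x : Fin m → ℝ => Matrix.vecMul x Nᵀ) '' convexHull ℝ (Set.range A) ∧
    (fun y : Fin m ⊕ Fin n → ℝ => fun j => y (Sum.inl j)) '' convexHull ℝ (Set.range AQ) =
      convexHull ℝ (Set.range A) := by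
  intro N AQ
  have hNinl : ∀ (x : Fin m → ℝ) (j : Fin m), Matrix.vecMul x Nᵀ (Sum.inl j) = x j := by
    intro x j
    simp [Matrix.vecMul, dotProduct, N, Matrix.transpose_apply,
      Matrix.fromRows_apply_inl, Matrix.one_apply, mul_comm]
  -- injectivity
  have hinj : Function.Injective (fun x : Fin m → ℝ => Matrix.vecMul x Nᵀ) := by
    intro x y hxy
    funext j
    have := congrFun hxy (Sum.inl j)
    simpa [hNinl] using this
  -- rows of AQ are f of rows of N*A
  have hrow : ∀ i, AQ i = Matrix.vecMul ((N * A) i) Nᵀ := by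
    intro i
    funext j
    simp [AQ, Matrix.mul_apply, Matrix.vecMul, dotProduct]
  -- rows of N*A
  have hrowl : ∀ i : Fin m, (N * A) (Sum.inl i) = A i := by
    intro i
    funext j
    simp [Matrix.mul_apply, N, Matrix.fromRows_apply_inl, Matrix.one_apply]
  have hrowr : ∀ i : Fin n, (N * A) (Sum.inr i) = ∑ k, M i k • A k := by
    intro i
    funext j
    simp [Matrix.mul_apply, N, Matrix.fromRows_apply_inr, Finset.sum_apply]
  -- convex hull of rows of N*A equals convex hull of rows of A
  have hhull : convexHull ℝ (Set.range fun i => (N * A) i) = convexHull ℝ (Set.range A) := by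
    apply Set.Subset.antisymm
    · apply convexHull_min _ (convex_convexHull ℝ _)
      rintro _ ⟨i, rfl⟩
      dsimp only
      cases i with
      | inl i => rw [hrowl]; exact subset_convexHull ℝ _ ⟨i, rfl⟩
      | inr i =>
        rw [hrowr]
        exact (convex_convexHull ℝ _).sum_mem (fun k _ => hM0 i k) (hM1 i)
          (fun k _ => subset_convexHull ℝ _ ⟨k, rfl⟩)
    · apply convexHull_mono
      rintro _ ⟨i, rfl⟩
      exact ⟨Sum.inl i, hrowl i⟩
  have hlin : IsLinearMap ℝ (fun x : Fin m → ℝ => Matrix.vecMul x Nᵀ) := by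
    constructor
    · intro x y; exact Matrix.add_vecMul Nᵀ x y
    · intro c x; exact Matrix.smul_vecMul c x Nᵀ
  have hmain : convexHull ℝ (Set.range AQ) =
      (fun x : Fin m → ℝ => Matrix.vecMul x Nᵀ) '' convexHull ℝ (Set.range A) := by
    have h0 : AQ = fun i => (fun x : Fin m → ℝ => Matrix.vecMul x Nᵀ) ((N * A) i) :=
      funext hrow
    have h1 : Set.range AQ =
        (fun x : Fin m → ℝ => Matrix.vecMul x Nᵀ) '' Set.range (fun i => (N * A) i) := by
      rw [h0]
      exact Set.range_comp (fun x : Fin m → ℝ => Matrix.vecMul x Nᵀ) (fun i => (N * A) i)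
    rw [h1, ← hlin.image_convexHull, hhull]
  refine ⟨hinj, hmain, ?_⟩
  rw [hmain, ← Set.image_comp]
  convert Set.image_id _
  · funext x
    simp only [Function.comp_apply]
    funext j
    exact hNinl x j
end
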